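/- Under the hypotheses of the previous statement, defining w_t = a_t/(λt) for t ≥ 1, the norm of w_t satisfies ‖w_t‖ ≤ (1/√λ) · √(1 + (R²/λ − 1)/t). In particular, ‖w_t‖ ≤ R/λ for all t ≥ 1 when R² ≥ λ, and ‖w_t‖ → at most 1/√λ as t → ∞. -/

import Mathlib

theorem weight_vector_norm_bound
    (d : ℕ) (lam R : ℝ) (hlam : 0 < lam) (hR : 0 < R)
    (a y w : ℕ → EuclideanSpace ℝ (Fin d))
    (ha0 : a 0 = 0)
    (hstep : ∀ t : ℕ,
      (a (t+1) = a t + y t ∧ (inner ℝ (a t) (y t) : ℝ) ≤ lam * (t : ℝ) ∧ ‖y t‖ ≤ R) ∨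
      a (t+1) = a t)
    (hw : ∀ t : ℕ, 1 ≤ t → w t = (1/(lam * (t : ℝ))) • a t) :
    ∀ t : ℕ, 1 ≤ t →
      ‖w t‖ ≤ (1/Real.sqrt lam) * Real.sqrt (1 + (R^2/lam - 1)/(t : ℝ)) ∧
      (lam ≤ R^2 → ‖w t‖ ≤ R/lam) := by
  have key : ∀ t : ℕ, ‖a t‖^2 ≤ lam * t * (t - 1) + R^2 * t := by
    intro t
    induction t with
    | zero => simp [ha0]
    | succ t ih =>
      rcases hstep t with ⟨h1, h2, h3⟩ | h1
      · have hy : ‖y t‖^2 ≤ R^2 := by nlinarith [norm_nonneg (y t)]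
        have hexp := norm_add_sq_real (a t) (y t)
        rw [h1, hexp]
        push_cast
        nlinarith
      · rw [h1]
        push_cast
        nlinarith [sq_nonneg R, (Nat.cast_nonneg t : (0:ℝ) ≤ t)]
  intro t ht
  have ht1 : (1:ℝ) ≤ t := by exact_mod_cast ht
  have htpos : (0:ℝ) < t := by linarith
  set E : ℝ := 1 + (R^2/lam - 1)/(t : ℝ) with hE_def
  have hEeq : E = ((t:ℝ) - 1)/t + (R^2/lam)/t := by
    rw [hE_def]; field_simp
    ring
  have hE0 : 0 ≤ E := by
    rw [hEeq]
    have h1 : 0 ≤ ((t:ℝ) - 1)/t := div_nonneg (by linarith) htpos.le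
    have h2 : 0 ≤ (R^2/lam)/t := by positivity
    linarith
  have hwt : ‖w t‖ = ‖a t‖ / (lam * t) := by
    rw [hw t ht, norm_smul, Real.norm_eq_abs,
      abs_of_pos (by positivity : (0:ℝ) < 1/(lam*(t:ℝ)))]
    ring
  have hsq : ‖w t‖^2 ≤ (1/lam) * E := by
    rw [hwt, div_pow]
    rw [div_le_iff₀ (by positivity)]
    have : (1/lam) * E * (lam * (t:ℝ))^2 = lam * t * (t - 1) + R^2 * t := by
      rw [hE_def]; field_simp; ring
    rw [this]
    exact key t
  have hb1 : ‖w t‖ ≤ (1/Real.sqrt lam) * Real.sqrt E := by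
    calc ‖w t‖ = Real.sqrt (‖w t‖^2) := (Real.sqrt_sq (norm_nonneg _)).symm
      _ ≤ Real.sqrt ((1/lam) * E) := Real.sqrt_le_sqrt hsq
      _ = (1/Real.sqrt lam) * Real.sqrt E := by
          rw [Real.sqrt_mul (by positivity), one_div, one_div, Real.sqrt_inv]
  refine ⟨hb1, fun hlR => ?_⟩
  have hE2 : E ≤ R^2/lam := by
    rw [hE_def]
    have hx : 0 ≤ R^2/lam - 1 := by
      rw [sub_nonneg, le_div_iff₀ hlam]; linarith
    have : (R^2/lam - 1)/t ≤ R^2/lam - 1 := by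
      rw [div_le_iff₀ htpos]
      nlinarith
    linarith
  have hsq2 : ‖w t‖^2 ≤ (R/lam)^2 := by
    have h1 : (1/lam) * (R^2/lam) = (R/lam)^2 := by field_simp
    have h2 : (1/lam) * E ≤ (1/lam) * (R^2/lam) :=
      mul_le_mul_of_nonneg_left hE2 (by positivity)
    linarith
  calc ‖w t‖ = Real.sqrt (‖w t‖^2) := (Real.sqrt_sq (norm_nonneg _)).symm
    _ ≤ Real.sqrt ((R/lam)^2) := Real.sqrt_le_sqrt hsq2
    _ = R/lam := Real.sqrt_sq (by positivity)
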